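/- Let a_1, …, a_n and s_1, …, s_n be vectors in ℝ^d with means A = (1/n) ∑ a_i and S = (1/n) ∑ s_i, and define σ_a² = (1/n) ∑_{i=1}^n ‖a_i − A‖², σ_s² = (1/n) ∑_{i=1}^n ‖s_i − S‖², and σ_as = (1/n) ∑_{i=1}^n ⟨a_i − A, s_i − S⟩. Let β ∈ ℝ, 1 ≤ b ≤ n, let B be a uniformly random subset of {1, …, n} of size b, and let μ̂ = (1/b) ∑_{i∈B} a_i + β ( S − (1/b) ∑_{i∈B} s_i ). Then E[ ‖μ̂ − A‖² ] = (1/b) · ((n − b)/(n − 1)) · ( σ_a² + β² σ_s² − 2β σ_as ). -/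

import Mathlib

open scoped RealInnerProductSpace
open Finset


lemma cnt {α : Type*} [DecidableEq α] (u t : Finset α) (ht : t ⊆ u) (b : ℕ) (htb : t.card ≤ b) :
    ((u.powersetCard b).filter (fun B => t ⊆ B)).card = (u.card - t.card).choose (b - t.card) := by
  rw [← card_sdiff_of_subset ht, ← card_powersetCard]
  apply Finset.card_bij (fun B _ => B \ t)
  · intro B hB
    simp only [mem_filter, mem_powersetCard] at hB
    obtain ⟨⟨hBu, hBcard⟩, htB⟩ := hB
    rw [mem_powersetCard]
    exact ⟨sdiff_subset_sdiff hBu (Finset.Subset.refl t), by rw [card_sdiff_of_subset htB, hBcard]⟩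
  · intro B1 h1 B2 h2 h
    simp only [mem_filter, mem_powersetCard] at h1 h2
    have e1 := sdiff_union_of_subset h1.2
    have e2 := sdiff_union_of_subset h2.2
    rw [← e1, ← e2, h]
  · intro C hC
    rw [mem_powersetCard] at hC
    refine ⟨C ∪ t, ?_, ?_⟩
    · simp only [mem_filter, mem_powersetCard]
      have hdisj : Disjoint C t := disjoint_of_subset_left hC.1 sdiff_disjoint
      refine ⟨⟨union_subset (hC.1.trans (sdiff_subset)) ht, ?_⟩, subset_union_right⟩
      rw [card_union_of_disjoint hdisj, hC.2, Nat.sub_add_cancel htb]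
    · have hdisj : Disjoint C t := disjoint_of_subset_left hC.1 sdiff_disjoint
      rw [union_sdiff_cancel_right hdisj]


lemma lemA {n b : ℕ} (hb : 1 ≤ b) (f : Fin n → ℝ) :
    ∑ B ∈ powersetCard b (univ : Finset (Fin n)), ∑ x ∈ B, f x
      = ((n - 1).choose (b - 1) : ℝ) * ∑ x, f x := by
  have h1 : ∀ B ∈ powersetCard b (univ : Finset (Fin n)), ∑ x ∈ B, f x
      = ∑ x : Fin n, if x ∈ B then f x else 0 := by
    intro B hB
    rw [Finset.sum_ite_mem, univ_inter]
  rw [Finset.sum_congr rfl h1, Finset.sum_comm, Finset.mul_sum]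
  refine Finset.sum_congr rfl fun x _ => ?_
  rw [Finset.sum_ite, Finset.sum_const_zero, add_zero, Finset.sum_const, nsmul_eq_mul]
  have := cnt (univ : Finset (Fin n)) {x} (by simp) b (by simpa using hb)
  simp only [card_singleton, card_univ, Fintype.card_fin, singleton_subset_iff] at this
  rw [this]


lemma lemB {n b : ℕ} (hb : 2 ≤ b) (g : Fin n → Fin n → ℝ) :
    ∑ B ∈ powersetCard b (univ : Finset (Fin n)), ∑ i ∈ B, ∑ j ∈ B.erase i, g i j
      = ((n - 2).choose (b - 2) : ℝ) * ∑ i, ∑ j ∈ univ.erase i, g i j := by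
  have h1 : ∀ B ∈ powersetCard b (univ : Finset (Fin n)), ∑ i ∈ B, ∑ j ∈ B.erase i, g i j
      = ∑ i : Fin n, ∑ j ∈ univ.erase i, if i ∈ B ∧ j ∈ B then g i j else 0 := by
    intro B _
    have h2 : ∀ i : Fin n, ∑ j ∈ univ.erase i, (if i ∈ B ∧ j ∈ B then g i j else 0)
        = if i ∈ B then ∑ j ∈ B.erase i, g i j else 0 := by
      intro i
      by_cases hi : i ∈ B
      · simp only [hi, true_and, if_true]
        rw [Finset.sum_ite_mem]
        congr 1
        ext j
        simp only [Finset.mem_inter, Finset.mem_erase, Finset.mem_univ, and_true, true_and]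

      · simp [hi]
    rw [Finset.sum_congr rfl (fun i _ => h2 i), Finset.sum_ite_mem, univ_inter]
  rw [Finset.sum_congr rfl h1, Finset.sum_comm, Finset.mul_sum]
  refine Finset.sum_congr rfl fun i _ => ?_
  rw [Finset.sum_comm, Finset.mul_sum]
  refine Finset.sum_congr rfl fun j hj => ?_
  rw [Finset.sum_ite, Finset.sum_const_zero, add_zero, Finset.sum_const, nsmul_eq_mul]
  have hji : j ≠ i := (Finset.mem_erase.mp hj).1
  have hcard : ({i, j} : Finset (Fin n)).card = 2 := by
    rw [Finset.card_insert_of_notMem (by simp [hji.symm]), Finset.card_singleton]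
  have := cnt (univ : Finset (Fin n)) {i, j} (by simp) b (by rw [hcard]; exact hb)
  simp only [hcard, card_univ, Fintype.card_fin, Finset.insert_subset_iff,
    Finset.singleton_subset_iff] at this
  rw [this]


section
variable {E : Type*} [NormedAddCommGroup E] [InnerProductSpace ℝ E]

-- expansion of squared norm of a sum
lemma expand_sq {n : ℕ} (c : Fin n → E) (B : Finset (Fin n)) :
    ‖∑ i ∈ B, c i‖ ^ 2
      = ∑ i ∈ B, ‖c i‖ ^ 2 + ∑ i ∈ B, ∑ j ∈ B.erase i, ⟪c i, c j⟫ := by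
  rw [← real_inner_self_eq_norm_sq, sum_inner]
  rw [← Finset.sum_add_distrib]
  refine Finset.sum_congr rfl fun i hi => ?_
  rw [inner_sum, ← Finset.add_sum_erase _ _ hi, real_inner_self_eq_norm_sq]

-- cross sum when total is zero
lemma cross_sum {n : ℕ} (c : Fin n → E) (hc : ∑ i, c i = 0) :
    ∑ i, ∑ j ∈ (univ : Finset (Fin n)).erase i, ⟪c i, c j⟫ = - ∑ i, ‖c i‖ ^ 2 := by
  rw [← Finset.sum_neg_distrib]
  refine Finset.sum_congr rfl fun i _ => ?_
  rw [← inner_sum, Finset.sum_erase_eq_sub (Finset.mem_univ i), hc, zero_sub,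
    inner_neg_right, real_inner_self_eq_norm_sq]

end


/-- Variance of the memory-bank / control-variate estimator: For a uniformly
random size-`b` subset `B` of `{1, …, n}` and the estimator
`μ̂(B) = (1/b) ∑_{i∈B} a i + β (S − (1/b) ∑_{i∈B} s i)`,
`E[‖μ̂ − A‖²] = (1/b) · ((n−b)/(n−1)) · (σ_a² + β² σ_s² − 2β σ_as)`, where the expectation
is the average over all size-`b` subsets. -/
theorem stmt_13 {d n : ℕ} (a s : Fin n → EuclideanSpace ℝ (Fin d)) (β : ℝ)
    (b : ℕ) (hb1 : 1 ≤ b) (hbn : b ≤ n) :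
    ((n.choose b : ℝ))⁻¹ *
        ∑ B ∈ Finset.powersetCard b (Finset.univ : Finset (Fin n)),
          ‖((b : ℝ)⁻¹ • ∑ i ∈ B, a i +
              β • ((n : ℝ)⁻¹ • (∑ i, s i) - (b : ℝ)⁻¹ • ∑ i ∈ B, s i)) -
            (n : ℝ)⁻¹ • ∑ i, a i‖ ^ 2 =
      (b : ℝ)⁻¹ * (((n : ℝ) - (b : ℝ)) / ((n : ℝ) - 1)) *
        (((n : ℝ)⁻¹ * ∑ i, ‖a i - (n : ℝ)⁻¹ • ∑ l, a l‖ ^ 2) +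
          β ^ 2 * ((n : ℝ)⁻¹ * ∑ i, ‖s i - (n : ℝ)⁻¹ • ∑ l, s l‖ ^ 2) -
          2 * β * ((n : ℝ)⁻¹ *
            ∑ i, ⟪a i - (n : ℝ)⁻¹ • ∑ l, a l, s i - (n : ℝ)⁻¹ • ∑ l, s l⟫)) := by
  have hn1 : 1 ≤ n := le_trans hb1 hbn
  have hb0 : (b : ℝ) ≠ 0 := Nat.cast_ne_zero.mpr (by omega)
  have hn0 : (n : ℝ) ≠ 0 := Nat.cast_ne_zero.mpr (by omega)
  set A : EuclideanSpace ℝ (Fin d) := (n : ℝ)⁻¹ • ∑ l, a l with hA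
  set S : EuclideanSpace ℝ (Fin d) := (n : ℝ)⁻¹ • ∑ l, s l with hS
  set c : Fin n → EuclideanSpace ℝ (Fin d) := fun i => (a i - A) - β • (s i - S) with hcdef
  set Sig2 : ℝ := ∑ i, ‖c i‖ ^ 2 with hSig2
  -- total of c is zero
  have hc : ∑ i, c i = 0 := by
    simp only [hcdef, Finset.sum_sub_distrib, ← Finset.smul_sum, Finset.sum_const,
      Finset.card_univ, Fintype.card_fin]
    match_scalars <;> field_simp <;> ring
  -- rewrite each summand
  have hsummand : ∀ B ∈ Finset.powersetCard b (Finset.univ : Finset (Fin n)),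
      ‖((b : ℝ)⁻¹ • ∑ i ∈ B, a i + β • (S - (b : ℝ)⁻¹ • ∑ i ∈ B, s i)) - A‖ ^ 2
        = ((b : ℝ)⁻¹) ^ 2 * ‖∑ i ∈ B, c i‖ ^ 2 := by
    intro B hB
    have hBcard : B.card = b := (Finset.mem_powersetCard.mp hB).2
    have hvec : ((b : ℝ)⁻¹ • ∑ i ∈ B, a i + β • (S - (b : ℝ)⁻¹ • ∑ i ∈ B, s i)) - A
        = (b : ℝ)⁻¹ • ∑ i ∈ B, c i := by
      have hsum : ∑ i ∈ B, c i
          = (∑ i ∈ B, a i) - (b : ℝ) • A - β • ((∑ i ∈ B, s i) - (b : ℝ) • S) := by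
        simp only [hcdef, Finset.sum_sub_distrib, ← Finset.smul_sum, Finset.sum_const, hBcard]
        match_scalars <;> ring
      rw [hsum]
      match_scalars <;> field_simp
    rw [hvec, norm_smul, mul_pow, Real.norm_eq_abs, abs_of_nonneg (by positivity)]
  -- RHS bracket equals n⁻¹ * Sig2
  have hbracket : (((n : ℝ)⁻¹ * ∑ i, ‖a i - A‖ ^ 2) +
          β ^ 2 * ((n : ℝ)⁻¹ * ∑ i, ‖s i - S‖ ^ 2) -
          2 * β * ((n : ℝ)⁻¹ * ∑ i, ⟪a i - A, s i - S⟫))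
      = (n : ℝ)⁻¹ * Sig2 := by
    have hterm : ∀ i : Fin n, ‖c i‖ ^ 2
        = ‖a i - A‖ ^ 2 + β ^ 2 * ‖s i - S‖ ^ 2 - 2 * β * ⟪a i - A, s i - S⟫ := by
      intro i
      rw [hcdef]
      rw [norm_sub_sq_real, real_inner_smul_right, norm_smul, mul_pow, Real.norm_eq_abs, sq_abs]
      ring
    rw [hSig2, Finset.sum_congr rfl (fun i _ => hterm i), Finset.sum_sub_distrib,
      Finset.sum_add_distrib, ← Finset.mul_sum, ← Finset.mul_sum]
    ring
  rw [Finset.sum_congr rfl hsummand, ← Finset.mul_sum, hbracket]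
  -- key combinatorial identity
  have hdiag := lemA (n := n) (b := b) hb1 (fun i => ‖c i‖ ^ 2)
  have hcross := cross_sum c hc
  have hexp : ∑ B ∈ Finset.powersetCard b (Finset.univ : Finset (Fin n)), ‖∑ i ∈ B, c i‖ ^ 2
      = (∑ B ∈ Finset.powersetCard b (Finset.univ : Finset (Fin n)), ∑ i ∈ B, ‖c i‖ ^ 2)
        + ∑ B ∈ Finset.powersetCard b (Finset.univ : Finset (Fin n)),
            ∑ i ∈ B, ∑ j ∈ B.erase i, ⟪c i, c j⟫ := by
    rw [← Finset.sum_add_distrib]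
    exact Finset.sum_congr rfl fun B _ => expand_sq c B
  by_cases hb2 : 2 ≤ b
  · -- b ≥ 2 case
    have hn2 : 2 ≤ n := le_trans hb2 hbn
    have hoff := lemB (n := n) (b := b) hb2 (fun i j => ⟪c i, c j⟫)
    have hkey : ∑ B ∈ Finset.powersetCard b (Finset.univ : Finset (Fin n)), ‖∑ i ∈ B, c i‖ ^ 2
        = (((n - 1).choose (b - 1) : ℝ) - ((n - 2).choose (b - 2) : ℝ)) * Sig2 := by
      rw [hexp, hdiag, hoff, hcross]
      ring
    rw [hkey]
    -- arithmetic
    have hC0 : (n.choose b : ℝ) ≠ 0 := Nat.cast_ne_zero.mpr (Nat.choose_pos hbn).ne'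
    have hnn1 : ((n : ℝ) - 1) ≠ 0 := by
      have : (2 : ℝ) ≤ (n : ℝ) := by exact_mod_cast hn2
      linarith
    have e1 : (n : ℝ) * ((n - 1).choose (b - 1) : ℝ) = (n.choose b : ℝ) * (b : ℝ) := by
      have := Nat.add_one_mul_choose_eq (n - 1) (b - 1)
      rw [Nat.sub_add_cancel hn1,
        Nat.sub_add_cancel hb1] at this
      exact_mod_cast this
    have e2 : ((n : ℝ) - 1) * ((n - 2).choose (b - 2) : ℝ)
        = ((n - 1).choose (b - 1) : ℝ) * ((b : ℝ) - 1) := by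
      have := Nat.add_one_mul_choose_eq (n - 2) (b - 2)
      have h1 : n - 2 + 1 = n - 1 := by omega
      have h2 : b - 2 + 1 = b - 1 := by omega
      rw [h1, h2] at this
      have : ((n - 1 : ℕ) : ℝ) * ((n - 2).choose (b - 2) : ℝ)
          = ((n - 1).choose (b - 1) : ℝ) * ((b - 1 : ℕ) : ℝ) := by exact_mod_cast this
      rwa [Nat.cast_sub hn1, Nat.cast_sub hb1, Nat.cast_one] at this
    have hc1 : ((n - 1).choose (b - 1) : ℝ) = (n.choose b : ℝ) * (b : ℝ) / (n : ℝ) := by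
      field_simp
      linarith [e1]
    have hc2 : ((n - 2).choose (b - 2) : ℝ)
        = (n.choose b : ℝ) * (b : ℝ) * ((b : ℝ) - 1) / ((n : ℝ) * ((n : ℝ) - 1)) := by
      rw [eq_div_iff (by exact mul_ne_zero hn0 hnn1)]
      have := e2
      rw [hc1] at this
      field_simp at this ⊢
      linarith [this]
    rw [hc1, hc2]
    field_simp
    ring
  · -- b = 1 case
    have hb1' : b = 1 := by omega
    subst hb1'
    have hoff : ∑ B ∈ Finset.powersetCard 1 (Finset.univ : Finset (Fin n)),
        ∑ i ∈ B, ∑ j ∈ B.erase i, ⟪c i, c j⟫ = 0 := by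
      refine Finset.sum_eq_zero fun B hB => Finset.sum_eq_zero fun i hi => ?_
      have hBcard : B.card = 1 := (Finset.mem_powersetCard.mp hB).2
      have : B.erase i = ∅ := by
        apply Finset.card_eq_zero.mp
        rw [Finset.card_erase_of_mem hi, hBcard]
      rw [this, Finset.sum_empty]
    have hkey : ∑ B ∈ Finset.powersetCard 1 (Finset.univ : Finset (Fin n)), ‖∑ i ∈ B, c i‖ ^ 2
        = Sig2 := by
      rw [hexp, hdiag, hoff, add_zero]
      simp
      rfl
    rw [hkey]
    have hch : (n.choose 1 : ℝ) = (n : ℝ) := by rw [Nat.choose_one_right]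
    rw [hch]
    by_cases hn2 : 2 ≤ n
    · have hnn1 : ((n : ℝ) - 1) ≠ 0 := by
        have : (2 : ℝ) ≤ (n : ℝ) := by exact_mod_cast hn2
        linarith
      rw [Nat.cast_one]
      field_simp
    · -- n = 1
      have hn1' : n = 1 := by omega
      subst hn1'
      have hc0 : c 0 = 0 := by
        have := hc
        rwa [Fin.sum_univ_one] at this
      have hSig0 : Sig2 = 0 := by
        rw [hSig2, Fin.sum_univ_one, hc0]
        simp
      rw [hSig0]
      simp
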